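/- Let d = (d_1,...,d_h) with 1 ≤ d_1 ≤ ... ≤ d_h and σ = Σ_{i=1}^h (d_i-1). Define φ_m for 2 ≤ m ≤ σ as φ_m = HF(S̄/(x^d); m) - HF(S̄/((x^d)+(U_{m-1})); m) where S̄ = k[x_1,...,x_h] and U_{m-1} is the lex-largest degree-(m-1) monomial not in (x^d). Then the function m ↦ φ_m is non-increasing for 2 ≤ m ≤ σ. -/

import Mathlib

open MvPolynomial Finsupp

variable {k : Type} [Field k]

/-- Hilbert function of `S/I` in degree `m`, where `S = k[x_1,...,x_n]`. -/
noncomputable def HF {n : ℕ} (I : Ideal (MvPolynomial (Fin n) k)) (m : ℕ) : ℕ :=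
  Module.finrank k
    ((homogeneousSubmodule (Fin n) k m).map (Ideal.Quotient.mkₐ k I).toLinearMap)

/-- The ideal `(x_1^{d_1},...,x_h^{d_h})` inside `k[x_1,...,x_n]`. -/
noncomputable def pows {n h : ℕ} (hh : h ≤ n) (d : Fin h → ℕ) :
    Ideal (MvPolynomial (Fin n) k) :=
  Ideal.span (Set.range fun i : Fin h => (X (Fin.castLE hh i) : MvPolynomial (Fin n) k) ^ d i)

/-- `u` is the exponent vector of the lexicographically largest monomial of degree `D`
not belonging to the ideal `I` (convention `x_1 > x_2 > ... > x_n`). -/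
def IsLexLargestNonmember {n : ℕ} (I : Ideal (MvPolynomial (Fin n) k)) (D : ℕ)
    (u : Fin n →₀ ℕ) : Prop :=
  (∑ i, u i) = D ∧ (monomial u (1 : k)) ∉ I ∧
    ∀ v : Fin n →₀ ℕ, (∑ i, v i) = D → (monomial v (1 : k)) ∉ I → toLex v ≤ toLex u

/-- Hilbert–Samuel (cumulative Hilbert) function of `S/I`. -/
noncomputable def cumHF {n : ℕ} (I : Ideal (MvPolynomial (Fin n) k)) (m : ℕ) : ℤ :=
  ∑ j ∈ Finset.range (m + 1), (HF I j : ℤ)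

/-- Forward difference operator. -/
def diffOp (f : ℕ → ℤ) : ℕ → ℤ := fun m => f (m + 1) - f m

/-- The multiplicity `e(S/I)`, where `t = dim S/I`: the eventual (constant) value of the
`t`-th finite difference of the Hilbert–Samuel function of `S/I`. -/
noncomputable def mult {n : ℕ} (I : Ideal (MvPolynomial (Fin n) k)) (t : ℕ) : ℤ :=
  Filter.limsup (diffOp^[t] (cumHF I)) Filter.atTop

/-- The height of an ideal: the infimum of heights of primes containing it. -/
noncomputable def idealHeight {n : ℕ} (I : Ideal (MvPolynomial (Fin n) k)) : ℕ∞ :=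
  ⨅ (P : PrimeSpectrum (MvPolynomial (Fin n) k)) (_ : I ≤ P.asIdeal), Order.height P

/-- A homogeneous ideal. -/
def IsHomogeneousIdeal {n : ℕ} (I : Ideal (MvPolynomial (Fin n) k)) : Prop :=
  ∀ f ∈ I, ∀ m : ℕ, homogeneousComponent m f ∈ I

/-- Hilbert function of the graded submodule `a/f` of `S/f` in degree `m`. -/
noncomputable def HFsub {n : ℕ} (f a : Ideal (MvPolynomial (Fin n) k)) (m : ℕ) : ℕ :=
  Module.finrank k
    ((Submodule.map (Ideal.Quotient.mkₐ k f).toLinearMap (homogeneousSubmodule (Fin n) k m)) ⊓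
      (Submodule.map (Ideal.Quotient.mkₐ k f).toLinearMap (Submodule.restrictScalars k a)) :
      Submodule k (MvPolynomial (Fin n) k ⧸ f))

section Aux

lemma sum_univ_eq_support' {n : ℕ} (v : Fin n →₀ ℕ) : ∑ i, v i = ∑ i ∈ v.support, v i :=
  (Finset.sum_subset (Finset.subset_univ _)
    (by simp +contextual [Finsupp.notMem_support_iff])).symm

lemma monomial_mem_span_iff {n : ℕ} {S : Set (Fin n →₀ ℕ)} {v : Fin n →₀ ℕ} :
    (monomial v (1:k)) ∈ Ideal.span ((fun s => monomial s (1:k)) '' S) ↔ ∃ s ∈ S, s ≤ v := by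
  rw [mem_ideal_span_monomial_image]
  simp [support_monomial]

lemma HF_eq_card {n : ℕ} (S : Set (Fin n →₀ ℕ)) (m : ℕ) (P : (Fin n →₀ ℕ) → Prop)
    [DecidablePred P]
    (hP : ∀ v, ((monomial v (1:k)) ∈ Ideal.span ((fun s => monomial s (1 : k)) '' S) ↔ P v)) :
    HF (Ideal.span ((fun s => monomial s (1:k)) '' S)) m
      = ((Finset.finsuppAntidiag Finset.univ m).filter fun v => ¬ P v).card := by
  classical
  set I : Ideal (MvPolynomial (Fin n) k) := Ideal.span ((fun s => monomial s (1:k)) '' S) with hI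
  set T : Finset (Fin n →₀ ℕ) :=
    (Finset.finsuppAntidiag Finset.univ m).filter (fun v => ¬ P v) with hT
  have hmemT : ∀ v : Fin n →₀ ℕ, v ∈ T ↔ (∑ i, v i) = m ∧ (monomial v (1:k)) ∉ I := by
    intro v
    simp only [hT, Finset.mem_filter, Finset.mem_finsuppAntidiag, hP]
    constructor
    · rintro ⟨⟨h1, -⟩, h2⟩; exact ⟨h1, h2⟩
    · rintro ⟨h1, h2⟩; exact ⟨⟨h1, Finset.subset_univ _⟩, h2⟩
  set f : T → MvPolynomial (Fin n) k ⧸ I :=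
    fun v => (Ideal.Quotient.mkₐ k I) (monomial (v : Fin n →₀ ℕ) (1:k)) with hf
  have hli : LinearIndependent k f := by
    rw [Fintype.linearIndependent_iff]
    intro g hg i
    set p : MvPolynomial (Fin n) k := ∑ v : T, g v • monomial (v : Fin n →₀ ℕ) (1:k) with hp
    have hpI : p ∈ I := by
      have h0 : (Ideal.Quotient.mkₐ k I) p = ∑ v : T, g v • f v := by
        rw [hp, map_sum]; exact Finset.sum_congr rfl fun v _ => map_smul _ _ _
      have h1 : (Ideal.Quotient.mkₐ k I) p = 0 := by rw [h0]; simpa [hf] using hg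
      rw [Ideal.Quotient.mkₐ_eq_mk] at h1
      exact Ideal.Quotient.eq_zero_iff_mem.mp h1
    have hcoeff : ∀ v : T, coeff (v : Fin n →₀ ℕ) p = g v := by
      intro v
      rw [hp, MvPolynomial.coeff_sum]
      rw [Finset.sum_eq_single v]
      · simp [coeff_smul, coeff_monomial]
      · intro b _ hbv
        have : (b : Fin n →₀ ℕ) ≠ (v : Fin n →₀ ℕ) := fun h => hbv (Subtype.ext h)
        simp [coeff_smul, coeff_monomial, this]
      · simp
    by_contra hgi
    have hsupp : (i : Fin n →₀ ℕ) ∈ p.support := by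
      rw [MvPolynomial.mem_support_iff, hcoeff i]; exact hgi
    obtain ⟨s, hs, hsle⟩ := mem_ideal_span_monomial_image.mp (hI ▸ hpI) _ hsupp
    have : (monomial (i : Fin n →₀ ℕ) (1:k)) ∈ I := by
      rw [hI, monomial_mem_span_iff]; exact ⟨s, hs, hsle⟩
    exact ((hmemT i).mp i.2).2 this
  have hspan : (homogeneousSubmodule (Fin n) k m).map (Ideal.Quotient.mkₐ k I).toLinearMap
      = Submodule.span k (Set.range f) := by
    apply le_antisymm
    · rintro _ ⟨q, hq, rfl⟩
      simp only [SetLike.mem_coe, mem_homogeneousSubmodule] at hq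
      have hq' : (Ideal.Quotient.mkₐ k I).toLinearMap q
          = ∑ v ∈ q.support, coeff v q • (Ideal.Quotient.mkₐ k I) (monomial v (1:k)) := by
        simp only [AlgHom.toLinearMap_apply]
        conv_lhs => rw [q.as_sum]
        rw [map_sum]
        refine Finset.sum_congr rfl fun v hv => ?_
        have hm1 : monomial v (coeff v q) = coeff v q • monomial v (1:k) := by
          rw [MvPolynomial.smul_monomial, smul_eq_mul, mul_one]
        rw [hm1, map_smul]
      rw [hq']
      refine Submodule.sum_mem _ fun v hv => Submodule.smul_mem _ _ ?_
      by_cases hvI : (monomial v (1:k)) ∈ I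
      · have h2 : (Ideal.Quotient.mkₐ k I) (monomial v (1:k)) = 0 := by
          rw [Ideal.Quotient.mkₐ_eq_mk]; exact Ideal.Quotient.eq_zero_iff_mem.mpr hvI
        rw [h2]; exact Submodule.zero_mem _
      · have hdeg : ∑ i ∈ v.support, v i = m := by
          have h3 := hq (MvPolynomial.mem_support_iff.mp hv)
          simpa [Finsupp.weight_apply, Finsupp.sum] using h3
        have hvT : v ∈ T := (hmemT v).mpr ⟨by rw [sum_univ_eq_support']; exact hdeg, hvI⟩
        exact Submodule.subset_span ⟨⟨v, hvT⟩, rfl⟩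
    · rw [Submodule.span_le]
      rintro _ ⟨v, rfl⟩
      refine ⟨monomial (v : Fin n →₀ ℕ) (1:k), ?_, rfl⟩
      simp only [SetLike.mem_coe, mem_homogeneousSubmodule]
      apply isHomogeneous_monomial
      rw [Finsupp.degree_apply]
      rw [← sum_univ_eq_support']
      exact ((hmemT v).mp v.2).1
  rw [HF, hspan, finrank_span_eq_card hli, Fintype.card_coe]

def pSum {h : ℕ} (d : Fin h → ℕ) (t : ℕ) : ℕ :=
  ∑ j ∈ Finset.univ.filter (fun j : Fin h => (j : ℕ) < t), (d j - 1)

noncomputable def greedy {h : ℕ} (d : Fin h → ℕ) (D : ℕ) : Fin h →₀ ℕ :=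
  Finsupp.equivFunOnFinite.symm fun i => min (d i - 1) (D - pSum d i)

lemma greedy_apply {h : ℕ} (d : Fin h → ℕ) (D : ℕ) (i : Fin h) :
    greedy d D i = min (d i - 1) (D - pSum d i) := rfl

lemma filter_succ_eq {h : ℕ} (t : ℕ) (ht : t < h) :
    Finset.univ.filter (fun j : Fin h => (j : ℕ) < t + 1)
      = insert (⟨t, ht⟩ : Fin h) (Finset.univ.filter (fun j : Fin h => (j : ℕ) < t)) := by
  ext j
  simp only [Finset.mem_insert, Finset.mem_filter, Finset.mem_univ, true_and]
  constructor
  · intro hj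
    rcases Nat.lt_succ_iff_lt_or_eq.mp hj with h1 | h1
    · exact Or.inr h1
    · exact Or.inl (Fin.ext h1)
  · rintro (rfl | hj)
    · simp
    · omega

lemma pSum_succ {h : ℕ} (d : Fin h → ℕ) (t : ℕ) (ht : t < h) :
    pSum d (t + 1) = pSum d t + (d ⟨t, ht⟩ - 1) := by
  unfold pSum
  rw [filter_succ_eq t ht, Finset.sum_insert (by simp), add_comm]

lemma greedy_psum {h : ℕ} (d : Fin h → ℕ) (D : ℕ) (t : ℕ) (ht : t ≤ h) :
    ∑ j ∈ Finset.univ.filter (fun j : Fin h => (j : ℕ) < t), greedy d D j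
      = min D (pSum d t) := by
  induction t with
  | zero => simp [pSum]
  | succ t ih =>
    have ht' : t < h := ht
    rw [pSum_succ d t ht']
    rw [filter_succ_eq t ht', Finset.sum_insert (by simp)]
    have ih' := ih (le_of_lt ht')
    rw [ih', greedy_apply]
    simp only [Fin.val_mk]
    omega

lemma greedy_sum {h : ℕ} (d : Fin h → ℕ) (D : ℕ) (hD : D ≤ ∑ i, (d i - 1)) :
    ∑ i, greedy d D i = D := by
  have h1 : Finset.univ.filter (fun j : Fin h => (j : ℕ) < h) = Finset.univ := by
    ext j; simp [j.isLt]
  have h2 := greedy_psum d D h le_rfl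
  rw [h1] at h2
  have h3 : pSum d h = ∑ i, (d i - 1) := by unfold pSum; rw [h1]
  rw [h2, h3]
  omega

lemma greedy_lt {h : ℕ} (d : Fin h → ℕ) (hd1 : ∀ i, 1 ≤ d i) (D : ℕ) (i : Fin h) :
    greedy d D i < d i := by
  rw [greedy_apply]
  have := hd1 i
  omega

lemma greedy_mono {h : ℕ} (d : Fin h → ℕ) {D D' : ℕ} (hDD : D ≤ D') (i : Fin h) :
    greedy d D i ≤ greedy d D' i := by
  rw [greedy_apply, greedy_apply]
  omega

lemma le_greedy_lex {h : ℕ} (d : Fin h → ℕ) (hd1 : ∀ i, 1 ≤ d i) (D : ℕ)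
    (v : Fin h →₀ ℕ) (hvd : ∀ i, v i < d i) (hsum : ∑ i, v i = D) :
    toLex v ≤ toLex (greedy d D) := by
  by_contra hcon
  have hlt : toLex (greedy d D) < toLex v := lt_of_not_ge hcon
  obtain ⟨j, hj1, hj2⟩ := Finsupp.lex_def.mp hlt
  have hj1' : ∀ i : Fin h, (i : ℕ) < (j : ℕ) → greedy d D i = v i := by
    intro i hi
    exact hj1 i (Fin.lt_def.mpr hi)
  have hj2' : greedy d D j < v j := hj2
  have hA : ∑ i ∈ Finset.univ.filter (fun i : Fin h => (i : ℕ) < (j : ℕ)), v i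
      = min D (pSum d j) := by
    rw [← greedy_psum d D j (le_of_lt j.isLt)]
    exact Finset.sum_congr rfl fun i hi =>
      (hj1' i (by simpa using (Finset.mem_filter.mp hi).2)).symm
  have hsub : ∑ i ∈ insert j (Finset.univ.filter (fun i : Fin h => (i : ℕ) < (j : ℕ))), v i
      ≤ D := by
    rw [← hsum]
    exact Finset.sum_le_sum_of_subset (Finset.subset_univ _)
  rw [Finset.sum_insert (by simp), hA] at hsub
  have hgj : greedy d D j = min (d j - 1) (D - pSum d j) := greedy_apply d D j
  have hvj : v j < d j := hvd j
  have h1 : 1 ≤ d j := hd1 j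
  omega

lemma pows_eq {h : ℕ} (d : Fin h → ℕ) :
    pows (k := k) le_rfl d
      = Ideal.span ((fun s => monomial s (1:k)) ''
          (Set.range fun i : Fin h => Finsupp.single i (d i))) := by
  unfold pows
  congr 1
  rw [← Set.range_comp]
  apply congrArg
  funext i
  simp only [Function.comp_apply]
  rw [X_pow_eq_monomial]
  norm_num [Fin.castLE]

lemma mem_pows_iff {h : ℕ} (d : Fin h → ℕ) (v : Fin h →₀ ℕ) :
    (monomial v (1:k)) ∈ pows (k := k) le_rfl d ↔ ∃ i, d i ≤ v i := by
  rw [pows_eq, monomial_mem_span_iff]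
  constructor
  · rintro ⟨s, ⟨i, rfl⟩, hle⟩
    exact ⟨i, Finsupp.single_le_iff.mp hle⟩
  · rintro ⟨i, hi⟩
    exact ⟨Finsupp.single i (d i), ⟨i, rfl⟩, Finsupp.single_le_iff.mpr hi⟩

lemma sup_span_eq {h : ℕ} (d : Fin h → ℕ) (u : Fin h →₀ ℕ) :
    pows (k := k) le_rfl d ⊔ Ideal.span {monomial u (1:k)}
      = Ideal.span ((fun s => monomial s (1:k)) ''
          ((Set.range fun i : Fin h => Finsupp.single i (d i)) ∪ {u})) := by
  rw [Set.image_union, Set.image_singleton, Ideal.span_union, pows_eq]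

lemma mem_powsSup_iff {h : ℕ} (d : Fin h → ℕ) (u v : Fin h →₀ ℕ) :
    (monomial v (1:k)) ∈ pows (k := k) le_rfl d ⊔ Ideal.span {monomial u (1:k)}
      ↔ (∃ i, d i ≤ v i) ∨ ∀ j, u j ≤ v j := by
  rw [sup_span_eq, monomial_mem_span_iff]
  constructor
  · rintro ⟨s, (⟨i, rfl⟩ | rfl), hle⟩
    · exact Or.inl ⟨i, Finsupp.single_le_iff.mp hle⟩
    · exact Or.inr (Finsupp.le_def.mp hle)
  · rintro (⟨i, hi⟩ | hle)
    · exact ⟨Finsupp.single i (d i), Or.inl ⟨i, rfl⟩, Finsupp.single_le_iff.mpr hi⟩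
    · exact ⟨u, Or.inr rfl, Finsupp.le_def.mpr hle⟩

lemma eq_single_of_sum_eq_one {h : ℕ} (w : Fin h →₀ ℕ) (hw : ∑ i, w i = 1) :
    ∃ i, w = Finsupp.single i 1 := by
  have hex : ∃ i, w i ≠ 0 := by
    by_contra hc
    push_neg at hc
    simp [hc] at hw
  obtain ⟨i, hi⟩ := hex
  refine ⟨i, ?_⟩
  ext j
  rcases eq_or_ne j i with rfl | hji
  · have h2 : w j ≤ ∑ x, w x :=
      Finset.single_le_sum (f := fun x => w x) (fun _ _ => Nat.zero_le _) (Finset.mem_univ j)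
    simp only [Finsupp.single_eq_same]
    omega
  · have h3 : w i + w j ≤ ∑ x, w x := by
      rw [← Finset.sum_pair (Ne.symm hji)]
      exact Finset.sum_le_sum_of_subset (Finset.subset_univ _)
    rw [Finsupp.single_eq_of_ne' (Ne.symm hji)]
    omega

lemma eq_greedy {h : ℕ} (d : Fin h → ℕ) (hd1 : ∀ i, 1 ≤ d i) (D : ℕ)
    (hD : D ≤ ∑ i, (d i - 1)) (u : Fin h →₀ ℕ)
    (hu : IsLexLargestNonmember (pows (k := k) le_rfl d) D u) : u = greedy d D := by
  obtain ⟨hdeg, hmem, hmax⟩ := hu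
  have hgmem : (monomial (greedy d D) (1:k)) ∉ pows (k := k) le_rfl d := by
    rw [mem_pows_iff]
    push_neg
    intro i
    exact greedy_lt d hd1 D i
  have h1 : toLex (greedy d D) ≤ toLex u := hmax _ (greedy_sum d D hD) hgmem
  have hustd : ∀ i, u i < d i := by
    intro i
    by_contra hc
    exact hmem ((mem_pows_iff (k := k) d u).mpr ⟨i, not_lt.mp hc⟩)
  have h2 : toLex u ≤ toLex (greedy d D) := le_greedy_lex d hd1 D u hustd hdeg
  exact toLex.injective (le_antisymm h2 h1)

lemma count_lemma {h : ℕ} (d : Fin h → ℕ) (hd1 : ∀ i, 1 ≤ d i) (D : ℕ) (u : Fin h →₀ ℕ)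
    (hdeg : ∑ i, u i = D) (hstd : ∀ i, u i < d i) :
    HF (pows (k := k) le_rfl d) (D + 1)
        - HF (pows (k := k) le_rfl d ⊔ Ideal.span {monomial u (1 : k)}) (D + 1)
      = (Finset.univ.filter fun i => u i + 1 < d i).card := by
  classical
  have hIcard : HF (pows (k := k) le_rfl d) (D + 1)
      = ((Finset.finsuppAntidiag Finset.univ (D+1)).filter
          fun v => ¬ ∃ i, d i ≤ v i).card := by
    rw [pows_eq]
    exact HF_eq_card _ (D+1) (fun v => ∃ i, d i ≤ v i)
      (fun v => by rw [← pows_eq]; exact mem_pows_iff d v)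
  have hJcard : HF (pows (k := k) le_rfl d ⊔ Ideal.span {monomial u (1 : k)}) (D + 1)
      = ((Finset.finsuppAntidiag Finset.univ (D+1)).filter
          fun v => ¬ ((∃ i, d i ≤ v i) ∨ ∀ j, u j ≤ v j)).card := by
    rw [sup_span_eq]
    exact HF_eq_card _ (D+1) (fun v => (∃ i, d i ≤ v i) ∨ ∀ j, u j ≤ v j)
      (fun v => by rw [← sup_span_eq]; exact mem_powsSup_iff d u v)
  set A : Finset (Fin h →₀ ℕ) :=
    (Finset.finsuppAntidiag Finset.univ (D+1)).filter (fun v => ¬ ∃ i, d i ≤ v i) with hA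
  have hBeq : (Finset.finsuppAntidiag Finset.univ (D+1)).filter
        (fun v => ¬ ((∃ i, d i ≤ v i) ∨ ∀ j, u j ≤ v j))
      = A.filter (fun v => ¬ ∀ j, u j ≤ v j) := by
    rw [hA, Finset.filter_filter]
    apply Finset.filter_congr
    intro v _
    tauto
  have hsplit := Finset.card_filter_add_card_filter_not
    (s := A) (p := fun v => ∀ j, u j ≤ v j)
  have hC : (A.filter fun v => ∀ j, u j ≤ v j).card
      = (Finset.univ.filter fun i => u i + 1 < d i).card := by
    symm
    apply Finset.card_bij (fun i _ => u + Finsupp.single i 1)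
    · intro i hi
      simp only [Finset.mem_filter, Finset.mem_univ, true_and] at hi
      simp only [Finset.mem_filter, hA, Finset.mem_finsuppAntidiag]
      have hvappl : ∀ j, (u + Finsupp.single i 1 : Fin h →₀ ℕ) j
          = u j + Finsupp.single i 1 j := fun j => rfl
      have hvlt : ∀ j, (u + Finsupp.single i 1 : Fin h →₀ ℕ) j < d j := by
        intro j
        rw [hvappl]
        rcases eq_or_ne j i with rfl | hji
        · rw [Finsupp.single_eq_same]; omega
        · rw [Finsupp.single_eq_of_ne' (Ne.symm hji)]
          have := hstd j
          omega
      refine ⟨⟨⟨?_, Finset.subset_univ _⟩, ?_⟩, ?_⟩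
      · have : ∑ j, (u + Finsupp.single i 1 : Fin h →₀ ℕ) j
            = (∑ j, u j) + ∑ j, (Finsupp.single i 1 : Fin h →₀ ℕ) j := by
          rw [← Finset.sum_add_distrib]
          exact Finset.sum_congr rfl fun j _ => hvappl j
        rw [this, hdeg]
        have : ∑ j, (Finsupp.single i 1 : Fin h →₀ ℕ) j = 1 := by
          rw [Finset.sum_eq_single i]
          · exact Finsupp.single_eq_same
          · intro b _ hbi
            exact Finsupp.single_eq_of_ne' (Ne.symm hbi)
          · simp
        omega
      · push_neg
        intro j
        exact hvlt j
      · intro j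
        rw [hvappl]
        omega
    · intro a ha b hb hab
      have := add_left_cancel hab
      exact Finsupp.single_left_injective one_ne_zero this
    · intro v hv
      simp only [Finset.mem_filter, hA, Finset.mem_finsuppAntidiag] at hv
      obtain ⟨⟨⟨hvsum, -⟩, hvne⟩, hvu⟩ := hv
      push_neg at hvne
      have hule : u ≤ v := Finsupp.le_def.mpr hvu
      have hw : u + (v - u) = v := add_tsub_cancel_of_le hule
      have hwsum : ∑ j, (v - u) j = 1 := by
        have h1 : ∀ j, (v - u) j = v j - u j := fun j => Finsupp.tsub_apply v u j
        have h2 : ∑ j, (v j - u j) = (∑ j, v j) - ∑ j, u j :=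
          Finset.sum_tsub_distrib _ (fun j _ => hvu j)
        rw [Finset.sum_congr rfl fun j _ => h1 j, h2, hvsum, hdeg]
        omega
      obtain ⟨i, hi⟩ := eq_single_of_sum_eq_one _ hwsum
      refine ⟨i, ?_, ?_⟩
      · simp only [Finset.mem_filter, Finset.mem_univ, true_and]
        have hvi : v i = u i + 1 := by
          rw [← hw, hi]
          simp [Finsupp.single_eq_same]
        have := hvne i
        omega
      · rw [← hw, hi]
  rw [hIcard, hJcard, hBeq]
  omega

end Aux

theorem stmt12 {k : Type} [Field k] {h : ℕ} (d : Fin h → ℕ) (hd1 : ∀ i, 1 ≤ d i)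
    (hmono : Monotone d) (m : ℕ) (hm2 : 2 ≤ m) (hmσ : m + 1 ≤ ∑ i, (d i - 1))
    (u u' : Fin h →₀ ℕ)
    (hu : IsLexLargestNonmember (pows (k := k) le_rfl d) (m - 1) u)
    (hu' : IsLexLargestNonmember (pows (k := k) le_rfl d) m u') :
    HF (pows (k := k) le_rfl d) (m + 1) -
        HF (pows (k := k) le_rfl d ⊔ Ideal.span {monomial u' (1 : k)}) (m + 1) ≤
      HF (pows (k := k) le_rfl d) m -
        HF (pows (k := k) le_rfl d ⊔ Ideal.span {monomial u (1 : k)}) m := by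
  classical
  have hu'g : u' = greedy d m := eq_greedy d hd1 m (by omega) u' hu'
  have hug : u = greedy d (m - 1) := eq_greedy d hd1 (m - 1) (by omega) u hu
  have hstd' : ∀ i, u' i < d i := by intro i; rw [hu'g]; exact greedy_lt d hd1 m i
  have hstd : ∀ i, u i < d i := by intro i; rw [hug]; exact greedy_lt d hd1 (m - 1) i
  have e1 := count_lemma (k := k) d hd1 m u' hu'.1 hstd'
  have e2 := count_lemma (k := k) d hd1 (m - 1) u hu.1 hstd
  have hm1 : m - 1 + 1 = m := by omega
  rw [hm1] at e2
  rw [e1, e2]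
  apply Finset.card_le_card
  intro i hi
  simp only [Finset.mem_filter, Finset.mem_univ, true_and] at hi ⊢
  have hmono' : u i ≤ u' i := by
    rw [hug, hu'g]
    exact greedy_mono d (by omega) i
  omega
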